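/- Let β ≥ 1, σ > 0, and Z_i(σ) the sequence with Z_i = 1 for i ≤ 0, Z_i = 1+iσ for 1 ≤ i ≤ β+1, Z_i = Z_{i-1} + σZ_{i-β-1} for i ≥ β+2. Then as formal power series in x, Σ_{n≥1} (Σ_{i=1}^n Z_{i-β-1} Z_{n-i-β}) x^n = x/(1 - x - σx^{β+1})², and consequently n·Z_n(σ)·(average throughput) = σ·(d/dσ)Z_n(σ), i.e., the average per-node throughput with equal rates equals (σ/n) Z_n'(σ)/Z_n(σ). -/

import Mathlib

open PowerSeries

/-- for the normalization constants Z_i(σ) of the linear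
network with equal rates, the generating function identity
Σ_{n≥1} (Σ_{i=1}^n Z_{i-β-1} Z_{n-i-β}) x^n = x/(1-x-σx^{β+1})² holds (stated
after clearing the denominator), and consequently the average per-node
throughput (1/n) Σ_{i=1}^n σ Z_{i-β-1} Z_{n-i-β} / Z_n equals
(σ/n) Z_n'(σ)/Z_n(σ). -/
theorem stmt18 (β : ℕ) (hβ : 1 ≤ β) (σ : ℝ) (hσ : 0 < σ)
    (Zf : ℝ → ℤ → ℝ)
    (hZ0 : ∀ s : ℝ, ∀ i : ℤ, i ≤ 0 → Zf s i = 1)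
    (hZsmall : ∀ s : ℝ, ∀ i : ℤ, 1 ≤ i → i ≤ β + 1 → Zf s i = 1 + i * s)
    (hZlarge : ∀ s : ℝ, ∀ i : ℤ, (β : ℤ) + 2 ≤ i →
      Zf s i = Zf s (i - 1) + s * Zf s (i - β - 1)) :
    (PowerSeries.mk
        (fun n : ℕ => ∑ i ∈ Finset.Icc 1 n,
          Zf σ ((i : ℤ) - β - 1) * Zf σ ((n : ℤ) - i - β))
      * (1 - X - PowerSeries.C (R := ℝ) σ * X ^ (β + 1)) ^ 2 = X) ∧
    (∀ n : ℕ, 1 ≤ n → ∀ D : ℝ, HasDerivAt (fun s => Zf s n) D σ →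
      (1 / (n : ℝ)) * ∑ i ∈ Finset.Icc 1 n,
          σ * Zf σ ((i : ℤ) - β - 1) * Zf σ ((n : ℤ) - i - β) / Zf σ n
        = (σ / n) * D / Zf σ n) := by
  classical
  -- the recursion holds for every integer index m ≥ 1
  have hrec : ∀ s : ℝ, ∀ m : ℤ, 1 ≤ m →
      Zf s m = Zf s (m - 1) + s * Zf s (m - β - 1) := by
    intro s m hm
    rcases le_or_gt ((β : ℤ) + 2) m with h | h
    · exact hZlarge s m h
    · have hm2 : m ≤ (β : ℤ) + 1 := by omega
      have h1 : Zf s m = 1 + m * s := hZsmall s m hm hm2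
      have h3 : Zf s (m - β - 1) = 1 := hZ0 s _ (by omega)
      have h2 : Zf s (m - 1) = 1 + (m - 1) * s := by
        rcases eq_or_lt_of_le hm with h4 | h4
        · rw [← h4]; norm_num [hZ0 s 0 le_rfl]
        · rw [hZsmall s (m - 1) (by omega) (by omega)]; push_cast; ring
      rw [h1, h2, h3]; push_cast; ring
  set u : ℕ → ℝ := fun m => Zf σ ((m : ℤ) - β) with hu
  set a : ℕ → ℝ := fun n : ℕ => ∑ i ∈ Finset.Icc 1 n,
      Zf σ ((i : ℤ) - β - 1) * Zf σ ((n : ℤ) - i - β) with ha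
  set P : PowerSeries ℝ := 1 - X - PowerSeries.C (R := ℝ) σ * X ^ (β + 1) with hPdef
  -- coefficient of a product with P
  have hP : ∀ (f : PowerSeries ℝ) (n : ℕ), coeff n (f * P) =
      coeff n f - (if 1 ≤ n then coeff (n - 1) f else 0)
        - σ * (if β + 1 ≤ n then coeff (n - (β + 1)) f else 0) := by
    intro f n
    have hfP : f * P = f - f * X ^ 1 - PowerSeries.C (R := ℝ) σ * (f * X ^ (β + 1)) := by
      rw [hPdef]; ring
    rw [hfP]
    simp only [map_sub, coeff_C_mul, coeff_mul_X_pow']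
  -- U := Σ u_m x^m satisfies U · P = 1
  have hU : PowerSeries.mk u * P = 1 := by
    ext n
    rw [hP, coeff_one]
    simp only [coeff_mk]
    rcases Nat.lt_or_ge n 1 with h0 | h1
    · interval_cases n
      simp [hu, hZ0 σ (-(β : ℤ)) (by omega)]
    rcases Nat.lt_or_ge n (β + 1) with h2 | h2
    · rw [if_pos h1, if_neg (by omega), if_neg (by omega)]
      have e1 : u n = 1 := hZ0 σ _ (by omega)
      have e2 : u (n - 1) = 1 := hZ0 σ _ (by omega)
      rw [e1, e2]; ring
    · rw [if_pos h1, if_pos h2, if_neg (by omega)]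
      have hm := hrec σ ((n : ℤ) - β) (by omega)
      have e1 : u n = Zf σ ((n : ℤ) - β) := rfl
      have e2 : u (n - 1) = Zf σ ((n : ℤ) - β - 1) := by
        simp only [hu]; congr 1; omega
      have e3 : u (n - (β + 1)) = Zf σ ((n : ℤ) - β - β - 1) := by
        simp only [hu]; congr 1; omega
      rw [e1, e2, e3, hm]; ring
  -- the convolution identity: a n = coefficient of X · U²
  have hconv : ∀ n : ℕ, a n = ∑ j ∈ Finset.range n, u j * u (n - 1 - j) := by
    intro n
    simp only [ha]
    have : Finset.Icc 1 n = Finset.Ico 1 (n + 1) := by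
      rw [Finset.Ico_add_one_right_eq_Icc]
    rw [this, Finset.sum_Ico_eq_sum_range]
    simp only [Nat.add_sub_cancel]
    refine Finset.sum_congr rfl fun j hj => ?_
    have hjn : j < n := Finset.mem_range.mp hj
    have e1 : ((1 + j : ℕ) : ℤ) - β - 1 = (j : ℤ) - β := by push_cast; ring
    have e2 : ((n : ℤ)) - ((1 + j : ℕ) : ℤ) - β = ((n - 1 - j : ℕ) : ℤ) - β := by omega
    rw [e1, e2]
  have hA : PowerSeries.mk a = X * (PowerSeries.mk u * PowerSeries.mk u) := by
    ext n
    rw [show (X : PowerSeries ℝ) = X ^ 1 by rw [pow_one], coeff_X_pow_mul']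
    simp only [coeff_mk]
    rcases Nat.lt_or_ge n 1 with h0 | h1
    · interval_cases n
      simp [ha]
    · rw [if_pos h1, coeff_mul, Finset.Nat.sum_antidiagonal_eq_sum_range_succ_mk]
      simp only [coeff_mk]
      rw [show (n - 1).succ = n by omega, hconv]
  -- Part 1
  have part1 : PowerSeries.mk a * P ^ 2 = X := by
    rw [hA, show (X : PowerSeries ℝ) * (PowerSeries.mk u * PowerSeries.mk u) * P ^ 2
        = X * ((PowerSeries.mk u * P) * (PowerSeries.mk u * P)) by ring, hU]
    ring
  -- derived identity: (mk a) · P = X · U, giving a recursion for a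
  have hAP : PowerSeries.mk a * P = X * PowerSeries.mk u := by
    rw [hA, show (X : PowerSeries ℝ) * (PowerSeries.mk u * PowerSeries.mk u) * P
        = (X * PowerSeries.mk u) * (PowerSeries.mk u * P) by ring, hU, mul_one]
  have harec : ∀ n : ℕ, β + 1 ≤ n →
      a n = a (n - 1) + u (n - 1) + σ * a (n - (β + 1)) := by
    intro n hn
    have hc := congrArg (coeff n) hAP
    rw [hP] at hc
    simp only [coeff_mk] at hc
    rw [if_pos (by omega), if_pos hn] at hc
    rw [show (X : PowerSeries ℝ) = X ^ 1 by rw [pow_one], coeff_X_pow_mul',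
      if_pos (by omega : 1 ≤ n), coeff_mk] at hc
    linarith
  -- the derivative of Z_n with respect to σ is a n
  have hDer : ∀ n : ℕ, HasDerivAt (fun s => Zf s (n : ℤ)) (a n) σ := by
    intro n
    induction n using Nat.strong_induction_on with
    | _ n ih =>
      rcases Nat.lt_or_ge n 1 with h0 | h1
      · interval_cases n
        have he : (fun s => Zf s ((0 : ℕ) : ℤ)) = fun _ : ℝ => (1 : ℝ) :=
          funext fun s => hZ0 s _ (by norm_num)
        have ha0 : a 0 = 0 := by simp [ha]
        rw [he, ha0]
        exact hasDerivAt_const σ 1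
      rcases Nat.lt_or_ge n (β + 2) with h2 | h2
      · -- 1 ≤ n ≤ β + 1
        have he : (fun s => Zf s (n : ℤ)) = fun s : ℝ => 1 + (n : ℝ) * s := by
          funext s
          rw [hZsmall s n (by omega) (by omega)]
          push_cast; ring
        have han : a n = n := by
          simp only [ha]
          have : ∀ i ∈ Finset.Icc 1 n,
              Zf σ ((i : ℤ) - β - 1) * Zf σ ((n : ℤ) - i - β) = 1 := by
            intro i hi
            obtain ⟨hi1, hi2⟩ := Finset.mem_Icc.mp hi
            rw [hZ0 σ _ (by omega), hZ0 σ _ (by omega), mul_one]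
          rw [Finset.sum_congr rfl this, Finset.sum_const, Nat.card_Icc]
          simp
        rw [he, han]
        have := ((hasDerivAt_id σ).const_mul (n : ℝ)).const_add (1 : ℝ)
        simpa using this
      · -- n ≥ β + 2
        have he : (fun s => Zf s (n : ℤ)) =
            fun s : ℝ => Zf s (((n - 1 : ℕ) : ℤ)) + s * Zf s (((n - (β + 1) : ℕ) : ℤ)) := by
          funext s
          rw [hZlarge s n (by omega)]
          have e1 : ((n : ℤ)) - 1 = ((n - 1 : ℕ) : ℤ) := by omega
          have e2 : ((n : ℤ)) - β - 1 = ((n - (β + 1) : ℕ) : ℤ) := by omega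
          rw [e1, e2]
        rw [he]
        have d1 := ih (n - 1) (by omega)
        have d2 := ih (n - (β + 1)) (by omega)
        have hd := d1.add ((hasDerivAt_id σ).mul d2)
        have hval : a n = a (n - 1) + (1 * Zf σ (((n - (β + 1) : ℕ) : ℤ)) +
            (fun s : ℝ => s) σ * a (n - (β + 1))) := by
          rw [harec n (by omega)]
          have : u (n - 1) = Zf σ (((n - (β + 1) : ℕ) : ℤ)) := by
            simp only [hu]; congr 1; omega
          rw [this]; simp; ring
        rw [hval]
        exact hd
  refine ⟨part1, ?_⟩
  intro n hn D hdD
  have hDeq : D = a n := hdD.unique (hDer n)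
  have hsum : (∑ i ∈ Finset.Icc 1 n,
      σ * Zf σ ((i : ℤ) - β - 1) * Zf σ ((n : ℤ) - i - β) / Zf σ n)
      = σ / Zf σ n * a n := by
    simp only [ha, Finset.mul_sum]
    exact Finset.sum_congr rfl fun i _ => by ring
  rw [hsum, hDeq]
  ring
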